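/- Let β > 1 be such that d(1,β) has only finitely many nonzero digits (so S_β is a subshift of finite type). Then there exists a constant C > 0 such that for every finite word i_0 … i_{n−1} ∈ S_β^*, C β^{−n} ≤ |π_β([i_0 … i_{n−1}])| ≤ β^{−n}. -/

import Mathlib

open Set MeasureTheory Filter Topology

noncomputable section

/-- The β-transformation `x ↦ βx mod 1`. -/
def fbeta (β : ℝ) (x : ℝ) : ℝ := Int.fract (β * x)

/-- The digit sequence `d(x, β)`, given by `d(x,β)_n = [β f_β^n(x)]`. -/
def bdigit (β x : ℝ) (n : ℕ) : ℕ := (⌊β * (fbeta β)^[n] x⌋).toNat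

/-- The β-shift `S_β`: the closure (product topology) of the set of digit sequences of
points of `[0,1)`. -/
def betaShift (β : ℝ) : Set (ℕ → ℕ) :=
  closure {d | ∃ x ∈ Set.Ico (0 : ℝ) 1, d = bdigit β x}

/-- `π_β ((i_k)) = ∑ i_k β^{-(k+1)}`. -/
def piBeta (β : ℝ) (d : ℕ → ℕ) : ℝ := ∑' k : ℕ, (d k : ℝ) / β ^ (k + 1)

/-- The finite word `w` occurs in the sequence `d` at position `m`. -/
def occursAt (w : List ℕ) (d : ℕ → ℕ) (m : ℕ) : Prop :=
  ∀ i < w.length, d (m + i) = w.getD i 0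

/-- The finite word `w` occurs somewhere in the sequence `d`. -/
def occursIn (w : List ℕ) (d : ℕ → ℕ) : Prop := ∃ m, occursAt w d m

/-- `w ∈ S_β^*`: the finite word `w` occurs in some sequence of `S_β`. -/
def wordIn (β : ℝ) (w : List ℕ) : Prop := ∃ d ∈ betaShift β, occursIn w d

/-- The finite word `w` occurs in some sequence of the set `S`. -/
def wordInSet (S : Set (ℕ → ℕ)) (w : List ℕ) : Prop := ∃ d ∈ S, occursIn w d

/-- The cylinder `[w]` in `S_β`. -/
def cylinder (β : ℝ) (w : List ℕ) : Set (ℕ → ℕ) :=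
  {d ∈ betaShift β | ∀ i < w.length, d i = w.getD i 0}

/-- A subshift of finite type inside `S_β`: the subset of `S_β` determined by a finite
set of forbidden words. -/
def IsSFTin (β : ℝ) (S : Set (ℕ → ℕ)) : Prop :=
  ∃ F : Finset (List ℕ), S = {d ∈ betaShift β | ∀ w ∈ F, ¬ occursIn w d}

/-- `S_β` is a subshift of finite type iff `d(1,β)` has only finitely many nonzero digits. -/
def betaShiftFiniteType (β : ℝ) : Prop := ∃ N, ∀ n ≥ N, bdigit β 1 n = 0

/-- The length (Lebesgue measure) of a set of reals. -/
def len (I : Set ℝ) : ℝ := (volume I).toReal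

/-- `I` is a (possibly degenerate) closed interval. -/
def IsClosedInterval (I : Set ℝ) : Prop := ∃ a b : ℝ, a ≤ b ∧ I = Set.Icc a b

/-- A legal move in Schmidt's game with ratio `ρ`: a closed subinterval `cur` of `prev`
with `|cur| ≥ ρ|prev|`. -/
def MoveLegal (ρ : ℝ) (prev cur : Set ℝ) : Prop :=
  IsClosedInterval cur ∧ cur ⊆ prev ∧ ρ * len prev ≤ len cur

/-- White has a winning strategy in Schmidt's `(α,γ)`-game on `[0,1]` with target set `E`:
there is a strategy (a function from the history of Black's moves to White's next move)
such that, for every sequence of moves of Black starting with a closed interval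
`B 0 ⊆ [0,1]`, White's moves are legal as long as Black's have been, and if Black always
moves legally then `⋂ k, W k ⊆ E`. -/
def WinsSchmidt (α γ : ℝ) (E : Set ℝ) : Prop :=
  ∃ strat : List (Set ℝ) → Set ℝ,
    ∀ B : ℕ → Set ℝ,
      (IsClosedInterval (B 0) ∧ B 0 ⊆ Set.Icc (0 : ℝ) 1) →
      (∀ n : ℕ,
        (∀ k < n, MoveLegal γ (strat (List.ofFn fun i : Fin (k + 1) => B i)) (B (k + 1))) →
        MoveLegal α (B n) (strat (List.ofFn fun i : Fin (n + 1) => B i))) ∧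
      ((∀ k : ℕ, MoveLegal γ (strat (List.ofFn fun i : Fin (k + 1) => B i)) (B (k + 1))) →
        (⋂ k : ℕ, strat (List.ofFn fun i : Fin (k + 1) => B i)) ⊆ E)

/-- `E` is `α`-winning: it is `(α,γ)`-winning for every `γ ∈ (0,1)`. -/
def AlphaWinning (α : ℝ) (E : Set ℝ) : Prop :=
  ∀ γ ∈ Set.Ioo (0 : ℝ) 1, WinsSchmidt α γ E

/-- A similarity transformation of `ℝ`. -/
def IsSimilarityMap (f : ℝ → ℝ) : Prop := ∃ a b : ℝ, a ≠ 0 ∧ ∀ x, f x = a * x + b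

/-- Falconer's class `𝒢^s`: `G_δ` sets `F` with `dim_H (⋂ i, f_i(F)) ≥ s` for every
sequence of similarity transformations `(f_i)`. -/
def FalconerClass (s : ℝ) (F : Set ℝ) : Prop :=
  IsGδ F ∧ ∀ f : ℕ → ℝ → ℝ, (∀ i, IsSimilarityMap (f i)) →
    ENNReal.ofReal s ≤ dimH (⋂ i, f i '' F)

/-- The suffix of `u` of length `m+1` coincides with the first `m+1` digits of `d(1,β)`. -/
def tailMatch (β : ℝ) (u : List ℕ) (m : ℕ) : Prop :=
  m < u.length ∧ ∀ t ≤ m, u.getD (u.length - 1 - m + t) 0 = bdigit β 1 t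
namespace Aux

variable {β x : ℝ}

lemma iter_mem (hx : x ∈ Set.Ico (0:ℝ) 1) (n : ℕ) : (fbeta β)^[n] x ∈ Set.Ico (0:ℝ) 1 := by
  induction n with
  | zero => simpa using hx
  | succ n ih =>
    rw [Function.iterate_succ_apply']
    exact ⟨Int.fract_nonneg _, Int.fract_lt_one _⟩

lemma digit_cast (hβ : 1 < β) (hx : x ∈ Set.Ico (0:ℝ) 1) (n : ℕ) :
    ((bdigit β x n : ℕ) : ℝ) = ⌊β * (fbeta β)^[n] x⌋ := by
  have h0 : (0:ℝ) ≤ β * (fbeta β)^[n] x :=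
    mul_nonneg (by linarith) (iter_mem hx n).1
  have : (0:ℤ) ≤ ⌊β * (fbeta β)^[n] x⌋ := Int.floor_nonneg.2 h0
  rw [bdigit]
  exact_mod_cast Int.toNat_of_nonneg this

lemma iter_succ (hβ : 1 < β) (hx : x ∈ Set.Ico (0:ℝ) 1) (n : ℕ) :
    (fbeta β)^[n+1] x = β * (fbeta β)^[n] x - bdigit β x n := by
  rw [Function.iterate_succ_apply', fbeta, Int.fract, digit_cast hβ hx]

lemma digit_lt (hβ : 1 < β) (hx : x ∈ Set.Ico (0:ℝ) 1) (n : ℕ) :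
    ((bdigit β x n : ℕ) : ℝ) < β := by
  rw [digit_cast hβ hx]
  calc (⌊β * (fbeta β)^[n] x⌋ : ℝ) ≤ β * (fbeta β)^[n] x := Int.floor_le _
  _ < β * 1 := by
      have h2 := (iter_mem (β:=β) hx n).2
      nlinarith
  _ = β := mul_one β


lemma summ (hβ : 1 < β) {d : ℕ → ℕ} (hd : ∀ k, ((d k : ℕ) : ℝ) < β) :
    Summable (fun k => ((d k : ℕ) : ℝ) / β ^ (k+1)) := by
  have hb0 : (0:ℝ) < β := by linarith
  have hinv : (0:ℝ) ≤ β⁻¹ := by positivity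
  have hinv1 : β⁻¹ < 1 := by
    rw [inv_lt_one_iff₀]; right; exact hβ
  refine Summable.of_nonneg_of_le (fun k => by positivity) (fun k => ?_)
    (summable_geometric_of_lt_one hinv hinv1)
  have hpow : (0:ℝ) < β ^ (k+1) := by positivity
  have : ((d k : ℕ) : ℝ) / β ^ (k+1) ≤ β / β ^ (k+1) := by
    gcongr
    exact le_of_lt (hd k)
  refine this.trans (le_of_eq ?_)
  rw [pow_succ' β k, ← div_div, div_self hb0.ne', one_div, inv_pow]

lemma partial_sum (hβ : 1 < β) (hx : x ∈ Set.Ico (0:ℝ) 1) (n : ℕ) :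
    x = (∑ k ∈ Finset.range n, ((bdigit β x k : ℕ) : ℝ) / β ^ (k+1))
        + (fbeta β)^[n] x / β ^ n := by
  have hb0 : (0:ℝ) < β := by linarith
  induction n with
  | zero => simp
  | succ n ih =>
    rw [Finset.sum_range_succ, iter_succ hβ hx n]
    have h1 : (β * (fbeta β)^[n] x - ↑(bdigit β x n)) / β ^ (n+1)
        = (fbeta β)^[n] x / β ^ n - ((bdigit β x n : ℕ):ℝ) / β ^ (n+1) := by
      field_simp
      ring
    rw [h1]
    linarith [ih]

lemma tendsto_partial (hβ : 1 < β) (hx : x ∈ Set.Ico (0:ℝ) 1) :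
    Filter.Tendsto (fun n => ∑ k ∈ Finset.range n, ((bdigit β x k : ℕ) : ℝ) / β ^ (k+1))
      Filter.atTop (nhds x) := by
  have hb0 : (0:ℝ) < β := by linarith
  have hinv : (0:ℝ) ≤ β⁻¹ := by positivity
  have hinv1 : β⁻¹ < 1 := by rw [inv_lt_one_iff₀]; right; exact hβ
  have hlim : Filter.Tendsto (fun n : ℕ => (fbeta β)^[n] x / β ^ n)
      Filter.atTop (nhds 0) := by
    have hg : Filter.Tendsto (fun n : ℕ => (β⁻¹) ^ n) Filter.atTop (nhds 0) :=
      tendsto_pow_atTop_nhds_zero_of_lt_one hinv hinv1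
    refine squeeze_zero (fun n => div_nonneg (iter_mem hx n).1 (by positivity))
      (fun n => ?_) hg
    have := (iter_mem (β:=β) hx n).2
    rw [div_le_iff₀ (by positivity), ← mul_pow, inv_mul_cancel₀ hb0.ne', one_pow]
    linarith
  have : Filter.Tendsto (fun n => x - (fbeta β)^[n] x / β ^ n)
      Filter.atTop (nhds (x - 0)) := (tendsto_const_nhds.sub hlim)
  simp only [sub_zero] at this
  refine this.congr (fun n => ?_)
  have := partial_sum hβ hx n
  linarith


lemma pi_bdigit (hβ : 1 < β) (hx : x ∈ Set.Ico (0:ℝ) 1) :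
    piBeta β (bdigit β x) = x := by
  have hs : Summable (fun k => ((bdigit β x k : ℕ) : ℝ) / β ^ (k+1)) :=
    summ hβ (fun k => digit_lt hβ hx k)
  exact tendsto_nhds_unique hs.hasSum.tendsto_sum_nat (tendsto_partial hβ hx)

/-- Interval right-endpoint sequence for the cylinder determined by the digits of `x`. -/
def Eseq (β x : ℝ) : ℕ → ℝ
  | 0 => 1
  | n+1 => min 1 (β * Eseq β x n - bdigit β x n)

lemma iter_lt_E (hβ : 1 < β) (hx : x ∈ Set.Ico (0:ℝ) 1) (n : ℕ) :
    (fbeta β)^[n] x < Eseq β x n := by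
  induction n with
  | zero => simpa [Eseq] using hx.2
  | succ n ih =>
    rw [Eseq, lt_min_iff]
    constructor
    · exact (iter_mem hx (n+1)).2
    · rw [iter_succ hβ hx n]
      have hb0 : (0:ℝ) < β := by linarith
      nlinarith

lemma E_pos (hβ : 1 < β) (hx : x ∈ Set.Ico (0:ℝ) 1) (n : ℕ) : 0 < Eseq β x n :=
  lt_of_le_of_lt (iter_mem hx n).1 (iter_lt_E hβ hx n)

lemma exists_prefix (hβ : 1 < β) (hx : x ∈ Set.Ico (0:ℝ) 1) (n : ℕ) :
    ∀ t : ℝ, 0 ≤ t → t < Eseq β x n →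
      ∃ y ∈ Set.Ico (0:ℝ) 1, (∀ k < n, bdigit β y k = bdigit β x k) ∧
        (fbeta β)^[n] y = t := by
  have hb0 : (0:ℝ) < β := by linarith
  induction n with
  | zero =>
    intro t ht0 ht1
    exact ⟨t, ⟨ht0, by simpa [Eseq] using ht1⟩, by simp, rfl⟩
  | succ n ih =>
    intro t ht0 ht1
    rw [Eseq, lt_min_iff] at ht1
    obtain ⟨ht11, ht12⟩ := ht1
    set d : ℕ := bdigit β x n with hd
    set t' : ℝ := ((d:ℝ) + t) / β with ht'
    have ht'0 : 0 ≤ t' := by positivity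
    have ht'E : t' < Eseq β x n := by
      rw [ht', div_lt_iff₀ hb0]
      nlinarith [ht12]
    obtain ⟨y, hy, hpre, hiter⟩ := ih t' ht'0 ht'E
    have hβt' : β * (fbeta β)^[n] y = (d:ℝ) + t := by
      rw [hiter, ht', mul_div_cancel₀ _ hb0.ne']
    have hfl : ⌊β * (fbeta β)^[n] y⌋ = (d:ℤ) := by
      rw [hβt']
      rw [Int.floor_eq_iff]
      push_cast
      constructor <;> linarith
    refine ⟨y, hy, ?_, ?_⟩
    · intro k hk
      rcases Nat.lt_succ_iff_lt_or_eq.1 hk with h | h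
      · exact hpre k h
      · subst h
        rw [bdigit, hfl, hd]
        simp
    · rw [Function.iterate_succ_apply', fbeta, Int.fract, hfl, hβt']
      push_cast
      ring


lemma orbit_mem (hβ : 1 < β) {m : ℕ} (hm : 1 ≤ m) :
    (fbeta β)^[m] 1 ∈ Set.Ico (0:ℝ) 1 := by
  obtain ⟨j, rfl⟩ := Nat.exists_eq_add_of_le hm
  rw [Function.iterate_add_apply]
  simp only [Function.iterate_one]
  exact ⟨Int.fract_nonneg _, Int.fract_lt_one _⟩

lemma exists_orbit_zero (hβ : 1 < β) (hft : ∃ N, ∀ n ≥ N, bdigit β 1 n = 0) :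
    ∃ N, (fbeta β)^[N] 1 = 0 := by
  have hb0 : (0:ℝ) < β := by linarith
  obtain ⟨N₀, hN₀⟩ := hft
  set N₁ := max N₀ 1 with hN₁
  by_contra h
  push_neg at h
  have key : ∀ k, (fbeta β)^[N₁ + k] 1 = β ^ k * (fbeta β)^[N₁] 1 := by
    intro k
    induction k with
    | zero => simp
    | succ k ih =>
      have hmem : (fbeta β)^[N₁ + k] 1 ∈ Set.Ico (0:ℝ) 1 :=
        orbit_mem hβ (le_trans (le_max_right _ _) (Nat.le_add_right _ _))
      have hdig : bdigit β 1 (N₁ + k) = 0 :=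
        hN₀ _ (le_trans (le_max_left _ _) (Nat.le_add_right _ _))
      have hfl : ⌊β * (fbeta β)^[N₁ + k] 1⌋ = 0 := by
        have h0 : (0:ℤ) ≤ ⌊β * (fbeta β)^[N₁ + k] 1⌋ :=
          Int.floor_nonneg.2 (mul_nonneg hb0.le hmem.1)
        have := hdig
        rw [bdigit] at this
        omega
      have hlt : β * (fbeta β)^[N₁ + k] 1 < 1 := by
        have := Int.lt_floor_add_one (β * (fbeta β)^[N₁ + k] 1)
        rw [hfl] at this; simpa using this
      have hge : (0:ℝ) ≤ β * (fbeta β)^[N₁ + k] 1 := mul_nonneg hb0.le hmem.1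
      have : (fbeta β)^[N₁ + (k+1)] 1 = β * (fbeta β)^[N₁ + k] 1 := by
        rw [show N₁ + (k+1) = (N₁ + k) + 1 from rfl, Function.iterate_succ_apply',
          fbeta, Int.fract_eq_self.2 ⟨hge, hlt⟩]
      rw [this, ih, pow_succ]
      ring
  have hpos : 0 < (fbeta β)^[N₁] 1 :=
    lt_of_le_of_ne (orbit_mem hβ (le_max_right _ _)).1 (Ne.symm (h N₁))
  obtain ⟨k, hk⟩ := pow_unbounded_of_one_lt (((fbeta β)^[N₁] 1)⁻¹) hβ
  have hlt1 : (fbeta β)^[N₁ + k] 1 < 1 :=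
    (orbit_mem hβ (le_trans (le_max_right _ _) (Nat.le_add_right _ _))).2
  rw [key k] at hlt1
  rw [inv_lt_iff_one_lt_mul₀ hpos] at hk
  nlinarith

lemma E_ge (hβ : 1 < β) (hx : x ∈ Set.Ico (0:ℝ) 1)
    {N : ℕ} (hN0 : (fbeta β)^[N] 1 = 0) (hNmin : ∀ k < N, (fbeta β)^[k] 1 ≠ 0)
    (n : ℕ) : ∃ k < N, Eseq β x n = (fbeta β)^[k] 1 := by
  have hb0 : (0:ℝ) < β := by linarith
  have hNpos : 0 < N := by
    rcases Nat.eq_zero_or_pos N with h | h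
    · exfalso; rw [h] at hN0; simp at hN0
    · exact h
  induction n with
  | zero => exact ⟨0, hNpos, by simp [Eseq]⟩
  | succ n ih =>
    obtain ⟨k, hkN, hk⟩ := ih
    set d : ℕ := bdigit β x n with hd
    have hEpos : 0 < Eseq β x (n+1) := E_pos hβ hx (n+1)
    rw [Eseq] at hEpos ⊢
    rw [lt_min_iff] at hEpos
    rw [hk] at hEpos ⊢
    by_cases hcase : (d:ℝ) ≤ β * (fbeta β)^[k] 1 - 1
    · refine ⟨0, hNpos, ?_⟩
      simp only [Function.iterate_zero_apply]
      rw [min_eq_left (by linarith [hEpos.2])]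
    · push_neg at hcase
      have hfl : ⌊β * (fbeta β)^[k] 1⌋ = (d:ℤ) := by
        rw [Int.floor_eq_iff]
        push_cast
        constructor <;> linarith [hEpos.2]
      have hnext : (fbeta β)^[k+1] 1 = β * (fbeta β)^[k] 1 - d := by
        rw [Function.iterate_succ_apply', fbeta, Int.fract, hfl]
        push_cast; ring
      have hk1N : k + 1 < N := by
        rcases lt_or_eq_of_le (Nat.succ_le_of_lt hkN) with h | h
        · exact h
        · exfalso
          have h0 : (fbeta β)^[k+1] 1 = 0 := by
            rw [show k + 1 = N by omega]; exact hN0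
          rw [h0] at hnext
          linarith [hEpos.2]
      refine ⟨k+1, hk1N, ?_⟩
      rw [← hnext]
      exact min_eq_right (orbit_mem hβ (Nat.le_add_left 1 k)).2.le


def K (β : ℝ) : Set (ℕ → ℕ) := {d | ∀ k, ((d k : ℕ) : ℝ) < β}

lemma K_closed : IsClosed (K β) := by
  have : K β = ⋂ k : ℕ, (fun d : ℕ → ℕ => d k) ⁻¹' {m : ℕ | ((m:ℕ):ℝ) < β} := by
    ext d; simp [K]
  rw [this]
  exact isClosed_iInter (fun k => (isClosed_discrete _).preimage (continuous_apply k))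

lemma bdigit_mem_K (hβ : 1 < β) (hx : x ∈ Set.Ico (0:ℝ) 1) : bdigit β x ∈ K β :=
  fun k => digit_lt hβ hx k

lemma betaShift_subset_K (hβ : 1 < β) : betaShift β ⊆ K β :=
  closure_minimal (by rintro d ⟨y, hy, rfl⟩; exact bdigit_mem_K hβ hy) K_closed

lemma continuousOn_pi (hβ : 1 < β) : ContinuousOn (piBeta β) (K β) := by
  have hb0 : (0:ℝ) < β := by linarith
  have hu : Summable (fun k : ℕ => β / β ^ (k+1)) := by
    have h : (fun k : ℕ => β / β ^ (k+1)) = fun k : ℕ => (β⁻¹) ^ k := by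
      funext k
      rw [pow_succ' β k, ← div_div, div_self hb0.ne', one_div, inv_pow]
    rw [h]
    exact summable_geometric_of_lt_one (by positivity)
      (by rw [inv_lt_one_iff₀]; right; exact hβ)
  have : ContinuousOn (fun d : ℕ → ℕ => ∑' k : ℕ, ((d k : ℕ):ℝ) / β ^ (k+1)) (K β) := by
    refine continuousOn_tsum (fun k => Continuous.continuousOn ?_) hu
      (fun k d hd => ?_)
    · exact (continuous_of_discreteTopology.comp (continuous_apply k)).div_const _
    · rw [Real.norm_eq_abs, abs_of_nonneg (by positivity)]
      have hk := hd k
      have hp : (0:ℝ) < β ^ (k+1) := by positivity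
      exact div_le_div_of_nonneg_right hk.le hp.le
  exact this

lemma pi_mem_Icc (hβ : 1 < β) {d : ℕ → ℕ} (hd : d ∈ betaShift β) :
    piBeta β d ∈ Set.Icc (0:ℝ) 1 := by
  have hcl : IsClosed (K β ∩ piBeta β ⁻¹' Set.Icc (0:ℝ) 1) :=
    (continuousOn_pi hβ).preimage_isClosed_of_isClosed K_closed isClosed_Icc
  have hsub : betaShift β ⊆ K β ∩ piBeta β ⁻¹' Set.Icc (0:ℝ) 1 := by
    refine closure_minimal ?_ hcl
    rintro e ⟨y, hy, rfl⟩
    refine ⟨bdigit_mem_K hβ hy, ?_⟩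
    simp only [Set.mem_preimage, pi_bdigit hβ hy]
    exact ⟨hy.1, hy.2.le⟩
  exact (hsub hd).2

def shiftn (n : ℕ) (d : ℕ → ℕ) : ℕ → ℕ := fun j => d (n + j)

lemma shiftn_bdigit (n : ℕ) : shiftn n (bdigit β x) = bdigit β ((fbeta β)^[n] x) := by
  funext j
  simp only [shiftn, bdigit]
  rw [add_comm n j, Function.iterate_add_apply]

lemma shiftn_mem (hβ : 1 < β) (n : ℕ) {d : ℕ → ℕ} (hd : d ∈ betaShift β) :
    shiftn n d ∈ betaShift β := by
  have hc : Continuous (shiftn n) := continuous_pi (fun j => continuous_apply (n + j))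
  have h1 : shiftn n d ∈ shiftn n '' betaShift β := Set.mem_image_of_mem _ hd
  have h2 : shiftn n '' betaShift β ⊆
      closure (shiftn n '' {d | ∃ x ∈ Set.Ico (0:ℝ) 1, d = bdigit β x}) :=
    (image_closure_subset_closure_image hc)
  refine closure_mono ?_ (h2 h1)
  rintro e ⟨e', ⟨y, hy, rfl⟩, rfl⟩
  exact ⟨(fbeta β)^[n] y, iter_mem hy n, shiftn_bdigit n⟩

lemma pi_split (hβ : 1 < β) {d : ℕ → ℕ} (hd : d ∈ K β) (n : ℕ) :
    piBeta β d = (∑ k ∈ Finset.range n, ((d k : ℕ):ℝ) / β ^ (k+1))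
      + (β ^ n)⁻¹ * piBeta β (shiftn n d) := by
  have hb0 : (0:ℝ) < β := by linarith
  have hs : Summable (fun k => ((d k : ℕ) : ℝ) / β ^ (k+1)) := summ hβ hd
  rw [piBeta, ← Summable.sum_add_tsum_nat_add n hs]
  congr 1
  have : ∀ j : ℕ, ((d (j + n) : ℕ):ℝ) / β ^ (j + n + 1)
      = (β ^ n)⁻¹ * (((shiftn n d j : ℕ):ℝ) / β ^ (j+1)) := by
    intro j
    rw [shiftn, add_comm n j]
    rw [show j + n + 1 = (j + 1) + n by omega, pow_add β (j+1) n, ← div_div,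
      div_eq_mul_inv _ (β ^ n), mul_comm]
  rw [tsum_congr this, tsum_mul_left]
  rfl

end Aux

/-- if `S_β` is of finite type then cylinder lengths satisfy
`C β^{-n} ≤ |π_β([i_0 … i_{n-1}])| ≤ β^{-n}` for some `C > 0`. -/
theorem sft_cylinder_bounds (β : ℝ) (hβ : 1 < β) (hft : betaShiftFiniteType β) :
    ∃ C > 0, ∀ w : List ℕ, wordIn β w →
      C * (β ^ w.length)⁻¹ ≤ len (piBeta β '' cylinder β w) ∧
        len (piBeta β '' cylinder β w) ≤ (β ^ w.length)⁻¹ := by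
  classical
  have hb0 : (0:ℝ) < β := by linarith
  obtain ⟨N', hN'⟩ := Aux.exists_orbit_zero hβ hft
  have hSne : {n : ℕ | (fbeta β)^[n] 1 = 0}.Nonempty := ⟨N', hN'⟩
  set N := sInf {n : ℕ | (fbeta β)^[n] 1 = 0} with hNdef
  have hN0 : (fbeta β)^[N] 1 = 0 := Nat.sInf_mem hSne
  have hNmin : ∀ k < N, (fbeta β)^[k] 1 ≠ 0 := fun k hk => Nat.notMem_of_lt_sInf hk
  have hNpos : 0 < N := by
    rcases Nat.eq_zero_or_pos N with h | h
    · exfalso; rw [h] at hN0; simp at hN0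
    · exact h
  have hrange : (Finset.range N).Nonempty := by
    rw [Finset.nonempty_range_iff]; omega
  set c : ℝ := (Finset.range N).inf' hrange (fun k => (fbeta β)^[k] 1) with hcdef
  have hcpos : 0 < c := by
    rw [hcdef, Finset.lt_inf'_iff]
    intro k hk
    rw [Finset.mem_range] at hk
    have h0 : 0 ≤ (fbeta β)^[k] 1 := by
      rcases Nat.eq_zero_or_pos k with h | h
      · rw [h]; norm_num
      · exact (Aux.orbit_mem hβ h).1
    exact lt_of_le_of_ne h0 (Ne.symm (hNmin k hk))
  refine ⟨c, hcpos, ?_⟩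
  intro w hw
  set n := w.length with hn
  -- produce a point x' ∈ [0,1) whose first n digits are w
  obtain ⟨d₀, hd₀, m, hm⟩ := hw
  have hd₀' : d₀ ∈ closure {d | ∃ x ∈ Set.Ico (0 : ℝ) 1, d = bdigit β x} := hd₀
  have hopen : IsOpen {e : ℕ → ℕ | ∀ i < n, e (m + i) = w.getD i 0} := by
    have heq : {e : ℕ → ℕ | ∀ i < n, e (m + i) = w.getD i 0}
        = ⋂ i ∈ Finset.range n, {e : ℕ → ℕ | e (m + i) = w.getD i 0} := by
      ext e; simp [Finset.mem_range]
    rw [heq]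
    refine isOpen_biInter_finset (fun i _ => ?_)
    have : {e : ℕ → ℕ | e (m + i) = w.getD i 0}
        = (fun e : ℕ → ℕ => e (m + i)) ⁻¹' {w.getD i 0} := by
      ext e; simp
    rw [this]
    exact (isOpen_discrete _).preimage (continuous_apply (m + i))
  have hmem : d₀ ∈ {e : ℕ → ℕ | ∀ i < n, e (m + i) = w.getD i 0} := fun i hi => hm i hi
  obtain ⟨e, heU, x, hx, rfl⟩ := mem_closure_iff.1 hd₀' _ hopen hmem
  have hx'mem : (fbeta β)^[m] x ∈ Set.Ico (0:ℝ) 1 := Aux.iter_mem hx m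
  set x' := (fbeta β)^[m] x with hx'def
  have hpre : ∀ i < n, bdigit β x' i = w.getD i 0 := by
    intro i hi
    have h1 : bdigit β x (m + i) = bdigit β x' i := by
      have := congrFun (Aux.shiftn_bdigit (β := β) (x := x) m) i
      simpa [Aux.shiftn] using this
    rw [← h1]
    exact heU i hi
  set v : ℝ := ∑ k ∈ Finset.range n, ((w.getD k 0 : ℕ):ℝ) / β ^ (k+1) with hvdef
  -- upper bound: image is inside an interval of length β⁻ⁿ
  have himg_sub : piBeta β '' cylinder β w ⊆ Set.Icc v (v + (β ^ n)⁻¹) := by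
    rintro _ ⟨d, hd, rfl⟩
    obtain ⟨hdS, hdpre⟩ := hd
    have hdK : d ∈ Aux.K β := Aux.betaShift_subset_K hβ hdS
    have hsplit := Aux.pi_split hβ hdK n
    have hsum : (∑ k ∈ Finset.range n, ((d k : ℕ):ℝ) / β ^ (k+1)) = v := by
      refine Finset.sum_congr rfl (fun k hk => ?_)
      rw [hdpre k (Finset.mem_range.1 hk)]
    have htail := Aux.pi_mem_Icc hβ (Aux.shiftn_mem hβ n hdS)
    have hip : (0:ℝ) < (β ^ n)⁻¹ := by positivity
    constructor
    · rw [hsplit, hsum]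
      nlinarith [htail.1]
    · rw [hsplit, hsum]
      nlinarith [htail.2, htail.1]
  -- lower bound: image contains an interval of length c·β⁻ⁿ
  have hEge : c ≤ Aux.Eseq β x' n := by
    obtain ⟨k, hk, heq⟩ := Aux.E_ge hβ hx'mem hN0 hNmin n
    rw [heq]
    exact Finset.inf'_le _ (Finset.mem_range.2 hk)
  have hlow : Set.Ico v (v + c * (β ^ n)⁻¹) ⊆ piBeta β '' cylinder β w := by
    rintro z ⟨hz1, hz2⟩
    have hpn : (0:ℝ) < β ^ n := by positivity
    set t := (z - v) * β ^ n with htdef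
    have ht0 : 0 ≤ t := mul_nonneg (by linarith) hpn.le
    have htc : t < c := by
      have h1 : z - v < c * (β ^ n)⁻¹ := by linarith
      have h2 : (z - v) * β ^ n < c * (β ^ n)⁻¹ * β ^ n :=
        mul_lt_mul_of_pos_right h1 hpn
      rwa [mul_assoc, inv_mul_cancel₀ hpn.ne', mul_one] at h2
    obtain ⟨y, hy, hypre, hyiter⟩ :=
      Aux.exists_prefix hβ hx'mem n t ht0 (htc.trans_le hEge)
    refine ⟨bdigit β y, ⟨subset_closure ⟨y, hy, rfl⟩, ?_⟩, ?_⟩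
    · intro i hi
      rw [hypre i hi]
      exact hpre i hi
    · rw [Aux.pi_bdigit hβ hy]
      have hps := Aux.partial_sum hβ hy n
      have hsum2 : (∑ k ∈ Finset.range n, ((bdigit β y k : ℕ):ℝ) / β ^ (k+1)) = v := by
        refine Finset.sum_congr rfl (fun k hk => ?_)
        rw [hypre k (Finset.mem_range.1 hk), hpre k (Finset.mem_range.1 hk)]
      rw [hsum2, hyiter] at hps
      rw [hps, htdef]
      field_simp
      ring
  -- measure computations
  have hvol_up : volume (piBeta β '' cylinder β w) ≤ ENNReal.ofReal ((β ^ n)⁻¹) := by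
    calc volume (piBeta β '' cylinder β w) ≤ volume (Set.Icc v (v + (β ^ n)⁻¹)) :=
          measure_mono himg_sub
    _ = ENNReal.ofReal ((β ^ n)⁻¹) := by rw [Real.volume_Icc, add_sub_cancel_left]
  have hne : volume (piBeta β '' cylinder β w) ≠ ⊤ :=
    (lt_of_le_of_lt hvol_up ENNReal.ofReal_lt_top).ne
  constructor
  · have h1 : ENNReal.ofReal (c * (β ^ n)⁻¹) ≤ volume (piBeta β '' cylinder β w) := by
      calc ENNReal.ofReal (c * (β ^ n)⁻¹)
          = volume (Set.Ico v (v + c * (β ^ n)⁻¹)) := by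
            rw [Real.volume_Ico, add_sub_cancel_left]
      _ ≤ volume (piBeta β '' cylinder β w) := measure_mono hlow
    have h2 := ENNReal.toReal_mono hne h1
    rw [ENNReal.toReal_ofReal (by positivity)] at h2
    exact h2
  · have h2 := ENNReal.toReal_mono ENNReal.ofReal_ne_top hvol_up
    rw [ENNReal.toReal_ofReal (by positivity)] at h2
    exact h2
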